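/- Let J be a finite nilpotent group acting by automorphisms on a finite nilpotent group N, and let φ : J → N be a crossed homomorphism whose restriction to each Sylow p-subgroup J_p of J is cohomologous (as a crossed homomorphism J_p → N) to the trivial map. Then φ is cohomologous to the trivial map. -/

import Mathlib

open Subgroup

/-- A nontrivial nilpotent group has nontrivial center. -/
lemma myCenterNeBot (G : Type*) [Group G] [Group.IsNilpotent G] [Nontrivial G] :
    Subgroup.center G ≠ ⊥ := by
  intro hbot
  obtain ⟨n, hn⟩ := Group.IsNilpotent.nilpotent G
  have key : ∀ m : ℕ, Subgroup.upperCentralSeries G m = ⊥ := by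
    intro m
    induction m with
    | zero => exact Subgroup.upperCentralSeries_zero G
    | succ m ih =>
      have hle : Subgroup.upperCentralSeries G (m+1) ≤ Subgroup.center G := by
        intro x hx
        rw [Subgroup.mem_upperCentralSeries_succ_iff] at hx
        rw [Subgroup.mem_center_iff]
        intro y
        have := hx y
        rw [ih, Subgroup.mem_bot] at this
        have h1 : x * y * x⁻¹ * y⁻¹ = 1 := this
        have : x * y = y * x := by
          have := congrArg (fun z => z * y * x) h1
          simpa [mul_assoc] using this
        exact this.symm
      rw [hbot] at hle
      exact le_bot_iff.mp hle
  rw [key n] at hn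
  exact absurd (hn.symm.trans rfl) (by simp [bot_ne_top (α := Subgroup G)])
universe u v

/-- Coprime action: a crossed homomorphism from `A` into a finite nilpotent group `C`
of coprime order is a coboundary. -/
lemma coprime_vanish_aux (n : ℕ) : ∀ (C : Type u) [Group C] [Finite C] [Group.IsNilpotent C],
    Nat.card C = n → ∀ (A : Type v) [Group A] [Finite A] (ψ : A →* MulAut C) (g : A → C),
    (∀ a b, g (a * b) = g a * ψ a (g b)) → (Nat.card A).Coprime (Nat.card C) →
    ∃ c : C, ∀ a, g a = c⁻¹ * ψ a c := by
  induction n using Nat.strong_induction_on with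
  | _ n IH =>
    intro C _ _ _ hcard A _ _ ψ g hg hco
    rcases subsingleton_or_nontrivial C with hC | hC
    · exact ⟨1, fun a => Subsingleton.elim _ _⟩
    -- center is nontrivial
    set Z := Subgroup.center C with hZdef
    have hZchar : ∀ (e : C ≃* C), Z.map e.toMonoidHom = Z :=
      Subgroup.characteristic_iff_map_eq.mp inferInstance
    have hZne : Z ≠ ⊥ := myCenterNeBot C
    -- quotient action
    haveI : Z.Normal := inferInstance
    have hψ'mk : ∀ (a : A) (x : C),
        QuotientGroup.congr Z Z (ψ a) (hZchar (ψ a)) ((x : C ⧸ Z)) = ((ψ a x : C) : C ⧸ Z) :=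
      fun a x => QuotientGroup.congr_mk _ _ _ _ x
    let ψ' : A →* MulAut (C ⧸ Z) := MonoidHom.mk'
      (fun a => QuotientGroup.congr Z Z (ψ a) (hZchar (ψ a)))
      (by
        intro a b
        ext x
        induction x using QuotientGroup.induction_on with
        | H x => rw [MulAut.mul_apply, hψ'mk, hψ'mk, hψ'mk, map_mul, MulAut.mul_apply])
    have hψ' : ∀ (a : A) (x : C), ψ' a ((x : C ⧸ Z)) = ((ψ a x : C) : C ⧸ Z) := hψ'mk
    -- cardinalities
    have hcardZ : 1 < Nat.card Z := (Subgroup.one_lt_card_iff_ne_bot Z).mpr hZne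
    have hcardQ : Nat.card (C ⧸ Z) < n := by
      rw [← hcard, Subgroup.card_eq_card_quotient_mul_card_subgroup Z]
      have h0 : 0 < Nat.card (C ⧸ Z) := Nat.card_pos
      exact (Nat.lt_mul_iff_one_lt_right h0).mpr hcardZ
    have hdvdQ : Nat.card (C ⧸ Z) ∣ Nat.card C := by
      rw [Subgroup.card_eq_card_quotient_mul_card_subgroup Z]; exact Dvd.intro _ rfl
    -- apply induction hypothesis to the quotient
    obtain ⟨cbar, hcbar⟩ := IH (Nat.card (C ⧸ Z)) hcardQ (C ⧸ Z) rfl A ψ'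
      (fun a => ((g a : C) : C ⧸ Z))
      (by
        intro a b
        show ((g (a*b) : C) : C ⧸ Z) = ((g a : C) : C ⧸ Z) * ψ' a ((g b : C) : C ⧸ Z)
        rw [hg a b, QuotientGroup.mk_mul, hψ'])
      (Nat.Coprime.coprime_dvd_right hdvdQ hco)
    obtain ⟨c₀, hc₀⟩ := QuotientGroup.mk_surjective cbar
    -- the twisted crossed hom, valued in the center
    have hmem : ∀ a, c₀ * g a * (ψ a c₀)⁻¹ ∈ Z := by
      intro a
      have : ((c₀ * g a * (ψ a c₀)⁻¹ : C) : C ⧸ Z) = 1 := by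
        rw [QuotientGroup.mk_mul, QuotientGroup.mk_mul, QuotientGroup.mk_inv,
          ← hψ' a c₀, hcbar a, hc₀]
        group
      exact (QuotientGroup.eq_one_iff _).mp this
    let h' : A → Z := fun a => ⟨c₀ * g a * (ψ a c₀)⁻¹, hmem a⟩
    -- action of A on Z
    have hZmem : ∀ (a : A) (z : C), z ∈ Z → ψ a z ∈ Z := by
      intro a z hz
      rw [← hZchar (ψ a)]
      exact ⟨z, hz, rfl⟩
    let τ : A → (Z →* Z) := fun a =>
      { toFun := fun z => ⟨ψ a z, hZmem a z z.2⟩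
        map_one' := by ext; simp
        map_mul' := by intro x y; ext; simp }
    have hτcoe : ∀ (a : A) (z : Z), (τ a z : C) = ψ a (z : C) := fun a z => rfl
    -- h' is a crossed hom
    have hh' : ∀ a b, h' (a * b) = h' a * τ a (h' b) := by
      intro a b
      ext
      show c₀ * g (a*b) * (ψ (a*b) c₀)⁻¹ = (c₀ * g a * (ψ a c₀)⁻¹) * ψ a (c₀ * g b * (ψ b c₀)⁻¹)
      rw [hg a b]
      simp only [map_mul, map_inv, MulAut.mul_apply]
      group
    -- abelian argument in Z
    haveI : Fintype A := Fintype.ofFinite A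
    letI : CommGroup Z := { (inferInstance : Group Z) with
      mul_comm := fun a b => Subtype.ext ((Subgroup.mem_center_iff.mp b.2) a) }
    let z : Z := ∏ a : A, h' a
    have hτz : ∀ b, τ b z = ((h' b)⁻¹) ^ (Nat.card A) * z := by
      intro b
      have h1 : τ b z = ∏ a : A, τ b (h' a) := map_prod (τ b) _ _
      rw [h1]
      have h2 : ∀ a : A, τ b (h' a) = (h' b)⁻¹ * h' (b * a) := by
        intro a
        have := hh' b a
        rw [this]; group
      rw [Finset.prod_congr rfl (fun a _ => h2 a)]
      rw [Finset.prod_mul_distrib, Finset.prod_const]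
      congr 1
      · rw [Finset.card_univ, Nat.card_eq_fintype_card]
      · exact Fintype.prod_bijective (fun a => b * a) (Group.mulLeft_bijective b) _ _ (fun x => rfl)
    have hpow : ∀ b, (h' b) ^ (Nat.card A) = z * (τ b z)⁻¹ := by
      intro b
      rw [hτz b]
      group
    have hcoZ : (Nat.card Z).Coprime (Nat.card A) :=
      (Nat.Coprime.coprime_dvd_right Z.card_subgroup_dvd_card hco).symm
    have hinjpow : Function.Injective (fun w : Z => w ^ (Nat.card A)) :=
      (powCoprime hcoZ).injective
    obtain ⟨v, hv⟩ : ∃ v : Z, v ^ (Nat.card A) = z := ⟨(powCoprime hcoZ).symm z,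
      (powCoprime hcoZ).apply_symm_apply z⟩
    have hkey : ∀ b, h' b = v * (τ b v)⁻¹ := by
      intro b
      apply hinjpow
      show (h' b) ^ (Nat.card A) = (v * (τ b v)⁻¹) ^ (Nat.card A)
      rw [hpow b, mul_pow, inv_pow, ← map_pow, hv]
    refine ⟨(v : C)⁻¹ * c₀, ?_⟩
    intro a
    have h2 : c₀ * g a * (ψ a c₀)⁻¹ = (v : C) * (ψ a (v : C))⁻¹ := by
      have := congrArg (fun w : Z => (w : C)) (hkey a)
      simpa [hτcoe] using this
    have h3 : g a = c₀⁻¹ * ((v:C) * (ψ a (v:C))⁻¹) * (ψ a c₀) := by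
      rw [← h2]; group
    rw [h3, mul_inv_rev, inv_inv, map_mul, map_inv]
    group
/-- Primary decomposition of an element w.r.t. a prime `q`. -/
lemma primary_decomp {G : Type*} [Group G] [Finite G] (q : ℕ) (hq : q.Prime) (g : G) :
    ∃ x y : G, g = x * y ∧ Commute x y ∧ (∃ k, orderOf x = q ^ k) ∧ ¬ q ∣ orderOf y := by
  set n₀ := orderOf g with hn₀def
  have hn₀ : n₀ ≠ 0 := (orderOf_pos g).ne'
  set k := n₀.factorization q with hkdef
  set m := n₀ / q ^ k with hmdef
  have hsplit : q ^ k * m = n₀ := Nat.ordProj_mul_ordCompl_eq_self n₀ q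
  have hqm : ¬ q ∣ m := Nat.not_dvd_ordCompl hq hn₀
  have hco : Nat.Coprime (q ^ k) m := Nat.Coprime.pow_left _ (Nat.coprime_ordCompl hq hn₀)
  obtain ⟨a, b, hab⟩ : ∃ a b : ℤ, (q ^ k : ℤ) * a + (m : ℤ) * b = 1 := by
    refine ⟨Nat.gcdA (q ^ k) m, Nat.gcdB (q ^ k) m, ?_⟩
    have h1 := Nat.gcd_eq_gcd_ab (q ^ k) m
    have h2 : Nat.gcd (q ^ k) m = 1 := hco
    rw [h2] at h1
    push_cast at h1 ⊢
    linarith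
  refine ⟨g ^ ((m : ℤ) * b), g ^ ((q ^ k : ℤ) * a), ?_, Commute.zpow_zpow_self g _ _, ?_, ?_⟩
  · rw [← zpow_add, show (m : ℤ) * b + (q ^ k : ℤ) * a = 1 by linarith, zpow_one]
  · have hx : (g ^ ((m : ℤ) * b)) ^ (q ^ k) = 1 := by
      rw [← zpow_natCast, ← zpow_mul]
      have h3 : (m : ℤ) * b * ((q : ℤ) ^ k) = (n₀ : ℤ) * b := by
        push_cast [← hsplit]; ring
      push_cast
      rw [h3, zpow_mul, zpow_natCast, hn₀def, pow_orderOf_eq_one, one_zpow]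
    obtain ⟨j, _, hj⟩ := (Nat.dvd_prime_pow hq).mp (orderOf_dvd_of_pow_eq_one hx)
    exact ⟨j, hj⟩
  · have hy : (g ^ ((q ^ k : ℤ) * a)) ^ m = 1 := by
      rw [← zpow_natCast, ← zpow_mul]
      have h3 : (q ^ k : ℤ) * a * (m : ℤ) = (n₀ : ℤ) * a := by
        push_cast [← hsplit]; ring
      rw [h3, zpow_mul, zpow_natCast, hn₀def, pow_orderOf_eq_one, one_zpow]
    intro hqd
    exact hqm (hqd.trans (orderOf_dvd_of_pow_eq_one hy))

/-- Membership in a normal Sylow subgroup is equivalent to having prime power order. -/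
lemma sylow_mem_iff {G : Type*} [Group G] [Finite G] (q : ℕ) [Fact q.Prime]
    (Q : Sylow q G) (hQ : (Q : Subgroup G).Normal) (x : G) :
    x ∈ (Q : Subgroup G) ↔ ∃ k, orderOf x = q ^ k := by
  constructor
  · intro hx
    obtain ⟨k, hk⟩ := Q.isPGroup' ⟨x, hx⟩
    have hxk : x ^ (q ^ k) = 1 := by
      have := congrArg (Subgroup.subtype (Q : Subgroup G)) hk
      simpa using this
    obtain ⟨j, _, hj⟩ := (Nat.dvd_prime_pow Fact.out).mp (orderOf_dvd_of_pow_eq_one hxk)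
    exact ⟨j, hj⟩
  · rintro ⟨k, hk⟩
    have hP : IsPGroup q (Subgroup.zpowers x) :=
      IsPGroup.of_card (by rw [Nat.card_zpowers, hk])
    obtain ⟨R, hR⟩ := hP.exists_le_sylow
    haveI : Unique (Sylow q G) := Sylow.unique_of_normal Q hQ
    have : R = Q := Subsingleton.elim R Q
    rw [← this]
    exact hR (Subgroup.mem_zpowers x)

/-- In a finite nilpotent group, the elements of order prime to `q` form a subgroup. -/
lemma qprime_subgroup (G : Type*) [Group G] [Finite G] [Group.IsNilpotent G]
    (q : ℕ) (hq : q.Prime) :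
    ∃ K : Subgroup G, ∀ y : G, y ∈ K ↔ ¬ q ∣ orderOf y := by
  have hn : ∀ {p : ℕ} [Fact p.Prime] (P : Sylow p G), (P : Subgroup G).Normal := by
    intro p hp P
    have h := ((isNilpotent_of_finite_tfae (G := G)).out 0 3).mp
    exact h inferInstance p hp P
  obtain ⟨e⟩ : Nonempty ((∀ p : (Nat.card G).primeFactors, ∀ P : Sylow (p : ℕ) G, (P : Subgroup G)) ≃* G) :=
    ⟨Sylow.directProductOfNormal hn⟩
  set ps := (Nat.card G).primeFactors with hpsdef
  -- order of elements of the pi-factors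
  have horder : ∀ (p : ps) (u : ∀ P : Sylow (p : ℕ) G, (P : Subgroup G)),
      ∃ k, orderOf u = (p : ℕ) ^ k := by
    intro p u
    haveI : Fact (Nat.Prime (p : ℕ)) := ⟨Nat.prime_of_mem_primeFactors p.2⟩
    haveI : Fintype (Sylow (p : ℕ) G) := Fintype.ofFinite _
    have h1 : u ^ (∏ P : Sylow (p : ℕ) G, orderOf (u P)) = 1 := by
      funext P
      rw [Pi.pow_apply, Pi.one_apply]
      exact orderOf_dvd_iff_pow_eq_one.mp (Finset.dvd_prod_of_mem _ (Finset.mem_univ P))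
    have h2 : ∃ K, (∏ P : Sylow (p : ℕ) G, orderOf (u P)) = (p : ℕ) ^ K := by
      refine Finset.prod_induction _ (fun t => ∃ K, t = (p : ℕ) ^ K) ?_ ⟨0, rfl⟩ ?_
      · rintro s t ⟨k1, rfl⟩ ⟨k2, rfl⟩; exact ⟨k1 + k2, (pow_add _ _ _).symm⟩
      · intro P _
        exact IsPGroup.iff_orderOf.mp P.isPGroup' (u P)
    obtain ⟨K, hK⟩ := h2
    rw [hK] at h1
    obtain ⟨j, _, hj⟩ := (Nat.dvd_prime_pow Fact.out).mp (orderOf_dvd_of_pow_eq_one h1)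
    exact ⟨j, hj⟩
  have hmul : ∀ a b : G, ¬ q ∣ orderOf a → ¬ q ∣ orderOf b → ¬ q ∣ orderOf (a * b) := by
    intro a b ha hb
    by_cases hqs : q ∈ ps
    · have horder_eq : ∀ w, orderOf (e w) = orderOf w := fun w =>
        orderOf_injective e.toMonoidHom e.injective w
      have hcompq : ∀ (c : G), ¬ q ∣ orderOf c → (e.symm c) ⟨q, hqs⟩ = 1 := by
        intro c hc
        haveI : Fact (Nat.Prime q) := ⟨hq⟩
        have h1 : orderOf ((e.symm c) ⟨q, hqs⟩) ∣ orderOf (e.symm c) := by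
          apply orderOf_dvd_of_pow_eq_one
          calc ((e.symm c) ⟨q, hqs⟩) ^ orderOf (e.symm c)
              = ((e.symm c) ^ orderOf (e.symm c)) ⟨q, hqs⟩ := rfl
            _ = 1 := by rw [pow_orderOf_eq_one]; rfl
        have h2 : orderOf (e.symm c) = orderOf c :=
          orderOf_injective e.symm.toMonoidHom e.symm.injective c
        obtain ⟨k, hk⟩ := horder ⟨q, hqs⟩ ((e.symm c) ⟨q, hqs⟩)
        rw [hk, h2] at h1
        rcases Nat.eq_zero_or_pos k with rfl | hkpos
        · rw [← orderOf_eq_one_iff, hk, pow_zero]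
        · exact absurd (dvd_trans (dvd_pow_self q hkpos.ne') h1) hc
      obtain ⟨t, rfl⟩ : ∃ t, e t = a := ⟨e.symm a, e.apply_symm_apply a⟩
      obtain ⟨s, rfl⟩ : ∃ s, e s = b := ⟨e.symm b, e.apply_symm_apply b⟩
      have hts : e (t * s) = e t * e s := map_mul e t s
      rw [← hts, horder_eq]
      intro hdvd
      haveI : Fintype ps := Fintype.ofFinite _
      have h1 : orderOf (t * s) ∣ ∏ p : ps, orderOf ((t * s) p) := by
        apply orderOf_dvd_of_pow_eq_one
        funext p
        rw [Pi.pow_apply, Pi.one_apply]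
        exact orderOf_dvd_iff_pow_eq_one.mp (Finset.dvd_prod_of_mem _ (Finset.mem_univ p))
      obtain ⟨p, _, hp⟩ := (Prime.dvd_finset_prod_iff hq.prime _).mp (hdvd.trans h1)
      obtain ⟨k, hk⟩ := horder p ((t * s) p)
      have hqp : q = (p : ℕ) := by
        rw [hk] at hp
        rcases Nat.eq_zero_or_pos k with rfl | hkpos
        · rw [pow_zero] at hp
          exact absurd (Nat.dvd_one.mp hp) hq.one_lt.ne'
        · exact (Nat.prime_dvd_prime_iff_eq hq
            (Nat.prime_of_mem_primeFactors p.2)).mp (hq.dvd_of_dvd_pow hp)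
      have hpq : p = (⟨q, hqs⟩ : ps) := by
        ext; exact hqp.symm
      have hcomp1 : (t * s) ⟨q, hqs⟩ = 1 := by
        rw [Pi.mul_apply]
        have h1 := hcompq (e t) ha
        have h2 := hcompq (e s) hb
        rw [e.symm_apply_apply] at h1 h2
        rw [h1, h2, one_mul]
      rw [hpq] at hp
      rw [hcomp1, orderOf_one] at hp
      exact hq.one_lt.ne' (Nat.dvd_one.mp hp)
    · intro hdvd
      have h1 : orderOf (a * b) ∣ Nat.card G := orderOf_dvd_natCard _
      exact hqs (Nat.mem_primeFactors.mpr ⟨hq, hdvd.trans h1, Nat.card_pos.ne'⟩)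
  refine ⟨{ carrier := {y | ¬ q ∣ orderOf y}
            one_mem' := by simp [orderOf_one, Nat.dvd_one, hq.one_lt.ne']
            mul_mem' := fun {a b} ha hb => hmul a b ha hb
            inv_mem' := by intro a ha; simpa [orderOf_inv] using ha }, fun y => Iff.rfl⟩
/-- Restrict an automorphism to an invariant subgroup. -/
def subAut {G : Type*} [Group G] (H : Subgroup G) (e : MulAut G)
    (he : ∀ x ∈ H, e x ∈ H) (he' : ∀ x ∈ H, e⁻¹ x ∈ H) : MulAut H where
  toFun x := ⟨e x, he x x.2⟩
  invFun x := ⟨e⁻¹ x, he' x x.2⟩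
  left_inv x := Subtype.ext (by simp)
  right_inv x := Subtype.ext (by simp)
  map_mul' x y := Subtype.ext (by simp)

lemma subAut_coe {G : Type*} [Group G] (H : Subgroup G) (e : MulAut G)
    (he : ∀ x ∈ H, e x ∈ H) (he' : ∀ x ∈ H, e⁻¹ x ∈ H) (x : H) :
    ((subAut H e he he' x : H) : G) = e (x : G) := rfl

lemma main_aux (J : Type v) [Group J] [Finite J] [Group.IsNilpotent J] (n : ℕ) :
    ∀ (N : Type u) [Group N] [Finite N] [Group.IsNilpotent N], Nat.card N = n →
    ∀ (φ : J →* MulAut N) (f : J → N),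
    (∀ j j', f (j * j') = f j * φ j (f j')) →
    (∀ p : ℕ, p.Prime → ∃ np : N, ∀ j : J, (∃ k, orderOf j = p ^ k) → f j = np⁻¹ * φ j np) →
    ∃ m : N, ∀ j : J, f j = m⁻¹ * φ j m := by
  induction n using Nat.strong_induction_on with
  | _ n IH =>
  intro N _ _ _ hcard φ f hf hloc
  rcases subsingleton_or_nontrivial N with hN | hN
  · exact ⟨1, fun j => Subsingleton.elim _ _⟩
  have hordpres : ∀ (e : MulAut N) (x : N), orderOf (e x) = orderOf x := fun e x =>
    orderOf_injective e.toMonoidHom e.injective x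
  have hφmul : ∀ (a b : J) (z : N), φ (a * b) z = φ a (φ b z) := fun a b z => by
    rw [map_mul φ a b]; rfl
  set q := (Nat.card N).minFac with hqdef
  have h1N : 1 < Nat.card N := Finite.one_lt_card
  have hq : q.Prime := Nat.minFac_prime (by omega)
  haveI : Fact q.Prime := ⟨hq⟩
  set Q : Sylow q N := default with hQdef
  have hQnormal : (Q : Subgroup N).Normal := by
    have h := ((isNilpotent_of_finite_tfae (G := N)).out 0 3).mp
    exact h inferInstance q ⟨hq⟩ Q
  have hQmem : ∀ x : N, x ∈ (Q : Subgroup N) ↔ ∃ k, orderOf x = q ^ k :=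
    sylow_mem_iff q Q hQnormal
  by_cases hQtop : (Q : Subgroup N) = ⊤
  · -- N is a q-group
    have hNq : ∀ x : N, ∃ k, orderOf x = q ^ k := fun x =>
      (hQmem x).mp (hQtop ▸ Subgroup.mem_top x)
    obtain ⟨v, hv⟩ : ∃ v, Nat.card N = q ^ v := IsPGroup.iff_card.mp (fun x => by
      obtain ⟨k, hk⟩ := hNq x
      exact ⟨k, by rw [← hk]; exact pow_orderOf_eq_one x⟩)
    -- the q'-Hall subgroup of J
    obtain ⟨K, hK⟩ := qprime_subgroup J q hq
    have hKcard : ¬ q ∣ Nat.card K := by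
      intro hdvd
      obtain ⟨z, hz⟩ := exists_prime_orderOf_dvd_card' (G := K) q hdvd
      have hoz : orderOf (z : J) = q := by rw [Subgroup.orderOf_coe]; exact hz
      exact ((hK (z : J)).mp z.2) (hoz ▸ dvd_refl q)
    have hcoKN : (Nat.card K).Coprime (Nat.card N) := by
      rw [hv]
      exact Nat.Coprime.pow_right _ ((hq.coprime_iff_not_dvd.mpr hKcard).symm)
    obtain ⟨m₀, hm₀⟩ := coprime_vanish_aux (Nat.card N) N rfl K (φ.comp K.subtype)
      (fun t => f (t : J)) (fun a b => by simpa using hf (a : J) (b : J)) hcoKN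
    obtain ⟨f', hf'def⟩ : ∃ g : J → N, g = fun j => m₀ * f j * (φ j m₀)⁻¹ := ⟨_, rfl⟩
    have hf' : ∀ j j', f' (j * j') = f' j * φ j (f' j') := by
      intro j j'
      simp only [hf'def, hf j j', map_mul, map_inv, MulAut.mul_apply]
      group
    have hf'K : ∀ t : J, t ∈ K → f' t = 1 := by
      intro t ht
      have h1 := hm₀ ⟨t, ht⟩
      simp only [hf'def]
      rw [show f t = m₀⁻¹ * φ t m₀ from h1]
      group
    obtain ⟨nq, hnq⟩ := hloc q hq
    obtain ⟨n', hn'def⟩ : ∃ w : N, w = nq * m₀⁻¹ := ⟨_, rfl⟩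
    have hf'Q : ∀ x : J, (∃ k, orderOf x = q ^ k) → f' x = n'⁻¹ * φ x n' := by
      intro x hx
      simp only [hf'def, hn'def, hnq x hx, map_mul, map_inv]
      group
    -- commutation between q-elements of J and K
    set QJ : Sylow q J := default with hQJdef
    have hQJnormal : (QJ : Subgroup J).Normal := by
      have h := ((isNilpotent_of_finite_tfae (G := J)).out 0 3).mp
      exact h inferInstance q ⟨hq⟩ QJ
    have hQJmem := sylow_mem_iff q QJ hQJnormal
    haveI hKnormal : K.Normal := by
      constructor
      intro a ha g
      rw [hK] at ha ⊢
      have hsc : SemiconjBy g a (g * a * g⁻¹) := by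
        show g * a = g * a * g⁻¹ * g
        group
      rwa [← SemiconjBy.orderOf_eq g hsc]
    have hdisj : Disjoint (QJ : Subgroup J) K := by
      rw [Subgroup.disjoint_def]
      intro z hzQ hzK
      obtain ⟨k, hk⟩ := (hQJmem z).mp hzQ
      have hno := (hK z).mp hzK
      rcases Nat.eq_zero_or_pos k with rfl | hkpos
      · rwa [pow_zero, orderOf_eq_one_iff] at hk
      · exact absurd (hk ▸ dvd_pow_self q hkpos.ne') hno
    have hcommQK : ∀ x : J, (∃ k, orderOf x = q ^ k) → ∀ t ∈ K, Commute x t := by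
      intro x hx t ht
      exact Subgroup.commute_of_normal_of_disjoint _ _ hQJnormal hKnormal hdisj
        x t ((hQJmem x).mpr hx) ht
    have hfix : ∀ x : J, (∃ k, orderOf x = q ^ k) → ∀ t ∈ K, φ t (f' x) = f' x := by
      intro x hx t ht
      have h1 : f' (t * x) = φ t (f' x) := by rw [hf' t x, hf'K t ht, one_mul]
      have h2 : f' (x * t) = f' x := by rw [hf' x t, hf'K t ht, map_one, mul_one]
      rw [← h1, ← (hcommQK x hx t ht).eq, h2]
    -- the fixed subgroup C'
    set C' : Subgroup N :=
      { carrier := {z : N | ∀ x : J, (∃ k, orderOf x = q ^ k) → φ x z = z}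
        one_mem' := fun x _ => map_one (φ x)
        mul_mem' := fun {a b} ha hb x hx => by rw [map_mul, ha x hx, hb x hx]
        inv_mem' := fun {a} ha x hx => by rw [map_inv, ha x hx] } with hC'def
    have hC'mem : ∀ z : N, z ∈ C' ↔ ∀ x : J, (∃ k, orderOf x = q ^ k) → φ x z = z :=
      fun z => Iff.rfl
    have hC'inv : ∀ t : J, t ∈ K → ∀ z ∈ C', φ t z ∈ C' := by
      intro t ht z hz
      rw [hC'mem]
      intro x hx
      have hc : x * t = t * x := (hcommQK x hx t ht).eq
      calc φ x (φ t z) = φ (x * t) z := (hφmul x t z).symm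
        _ = φ (t * x) z := by rw [hc]
        _ = φ t (φ x z) := hφmul t x z
        _ = φ t z := by rw [(hC'mem z).mp hz x hx]
    let ψC : K →* MulAut C' := MonoidHom.mk'
      (fun t => subAut C' (φ (t : J)) (fun z hz => hC'inv (t : J) t.2 z hz)
        (fun z hz => by
          have hinv : (φ (t : J))⁻¹ = φ ((t : J)⁻¹) := (map_inv φ (t : J)).symm
          rw [hinv]
          exact hC'inv _ (K.inv_mem t.2) z hz))
      (by
        intro a b
        ext z
        show φ ((a : J) * (b : J)) (z : N) = φ (a : J) (φ (b : J) (z : N))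
        exact hφmul _ _ _)
    have hψCcoe : ∀ (t : K) (z : C'), ((ψC t z : C') : N) = φ (t : J) (z : N) := fun t z => rfl
    have hk'mem : ∀ t : K, n' * (φ (t : J) n')⁻¹ ∈ C' := by
      intro t
      rw [hC'mem]
      intro x hx
      have h1 : φ x n' = n' * f' x := by rw [hf'Q x hx]; group
      have hc : x * (t : J) = (t : J) * x := (hcommQK x hx (t : J) t.2).eq
      have h2 : φ x (φ (t : J) n') = φ (t : J) n' * f' x := by
        calc φ x (φ (t : J) n') = φ (x * (t : J)) n' := (hφmul x (t : J) n').symm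
          _ = φ ((t : J) * x) n' := by rw [hc]
          _ = φ (t : J) (φ x n') := hφmul (t : J) x n'
          _ = φ (t : J) (n' * f' x) := by rw [h1]
          _ = φ (t : J) n' * φ (t : J) (f' x) := map_mul (φ (t : J)) _ _
          _ = φ (t : J) n' * f' x := by rw [hfix x hx (t : J) t.2]
      rw [map_mul (φ x) n' ((φ (t : J)) n')⁻¹, map_inv (φ x) ((φ (t : J)) n'), h1, h2]
      group
    let k' : K → C' := fun t => ⟨n' * (φ (t : J) n')⁻¹, hk'mem t⟩
    have hk'cross : ∀ a b : K, k' (a * b) = k' a * ψC a (k' b) := by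
      intro a b
      apply Subtype.ext
      show n' * (φ ((a * b : K) : J) n')⁻¹
          = (n' * (φ (a : J) n')⁻¹) * φ (a : J) (n' * (φ (b : J) n')⁻¹)
      have hab : ((a * b : K) : J) = (a : J) * (b : J) := rfl
      rw [hab, hφmul (a : J) (b : J) n',
        map_mul (φ (a : J)) n' ((φ (b : J)) n')⁻¹, map_inv (φ (a : J)) ((φ (b : J)) n')]
      group
    have hcoKC : (Nat.card K).Coprime (Nat.card C') := by
      obtain ⟨w, _, hwe⟩ := (Nat.dvd_prime_pow hq).mp (hv ▸ C'.card_subgroup_dvd_card)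
      rw [hwe]
      exact Nat.Coprime.pow_right _ ((hq.coprime_iff_not_dvd.mpr hKcard).symm)
    obtain ⟨c, hc⟩ := coprime_vanish_aux (Nat.card C') C' rfl K ψC k' hk'cross hcoKC
    obtain ⟨u, hudef⟩ : ∃ w : N, w = (c : N) * n' := ⟨_, rfl⟩
    have hufix : ∀ t : J, t ∈ K → φ t u = u := by
      intro t ht
      have h1 := congrArg (fun z : C' => (z : N)) (hc ⟨t, ht⟩)
      simp only [Subgroup.coe_mul, Subgroup.coe_inv, hψCcoe] at h1
      have h2 : φ t (c : N) = (c : N) * (n' * (φ t n')⁻¹) := by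
        rw [show (n' * (φ t n')⁻¹ : N) = (c : N)⁻¹ * φ t (c : N) from h1]
        group
      rw [hudef, map_mul (φ t) (c : N) n', h2]
      group
    have hux : ∀ x : J, (∃ k, orderOf x = q ^ k) → f' x = u⁻¹ * φ x u := by
      intro x hx
      have hcfix : φ x (c : N) = (c : N) := (hC'mem (c : N)).mp c.2 x hx
      rw [hf'Q x hx, hudef, map_mul (φ x) (c : N) n', hcfix,
        mul_inv_rev (c : N) n']
      group
    refine ⟨u * m₀, ?_⟩
    intro j
    obtain ⟨x, y, hxy, hcomm, hxq, hyq⟩ := primary_decomp q hq j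
    have hyK : y ∈ K := (hK y).mpr hyq
    have h1 : f' j = f' x := by
      rw [hxy, hf' x y, hf'K y hyK, map_one, mul_one]
    have h2 : φ j u = φ x u := by
      rw [hxy, hφmul x y u, hufix y hyK]
    have h3 : f' j = u⁻¹ * φ j u := by rw [h1, h2]; exact hux x hxq
    have h4 : f j = m₀⁻¹ * f' j * φ j m₀ := by simp only [hf'def]; group
    rw [h4, h3, mul_inv_rev u m₀, map_mul (φ j) u m₀]
    group
  · -- splitting case: Q is a proper nontrivial normal Sylow subgroup
    have hqdvd : q ∣ Nat.card N := Nat.minFac_dvd _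
    have hQne : (Q : Subgroup N) ≠ ⊥ := by
      obtain ⟨z, hz⟩ := exists_prime_orderOf_dvd_card' (G := N) q hqdvd
      intro hbot
      have hzQ : z ∈ (Q : Subgroup N) := (hQmem z).mpr ⟨1, by rw [hz, pow_one]⟩
      rw [hbot, Subgroup.mem_bot] at hzQ
      rw [hzQ, orderOf_one] at hz
      exact hq.one_lt.ne' hz.symm
    obtain ⟨KN, hKN⟩ := qprime_subgroup N q hq
    haveI hKNnormal : KN.Normal := by
      constructor
      intro a ha g
      rw [hKN] at ha ⊢
      have hsc : SemiconjBy g a (g * a * g⁻¹) := by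
        show g * a = g * a * g⁻¹ * g
        group
      rwa [← SemiconjBy.orderOf_eq g hsc]
    have hdisjQK : ∀ z : N, z ∈ (Q : Subgroup N) → z ∈ KN → z = 1 := by
      intro z hzQ hzK
      obtain ⟨k, hk⟩ := (hQmem z).mp hzQ
      have hno := (hKN z).mp hzK
      rcases Nat.eq_zero_or_pos k with rfl | hkpos
      · rwa [pow_zero, orderOf_eq_one_iff] at hk
      · exact absurd (hk ▸ dvd_pow_self q hkpos.ne') hno
    have hcommQK : ∀ a ∈ (Q : Subgroup N), ∀ b ∈ KN, Commute a b := by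
      intro a haQ b hbK
      refine Subgroup.commute_of_normal_of_disjoint _ _ hQnormal hKNnormal ?_ a b haQ hbK
      rw [Subgroup.disjoint_def]
      exact fun hzq hzk => hdisjQK _ hzq hzk
    have hQpres : ∀ (e : MulAut N) (x : N), x ∈ (Q : Subgroup N) → e x ∈ (Q : Subgroup N) := by
      intro e x hx
      rw [hQmem] at hx ⊢
      obtain ⟨k, hk⟩ := hx
      exact ⟨k, by rw [hordpres e x, hk]⟩
    have hKpres : ∀ (e : MulAut N) (x : N), x ∈ KN → e x ∈ KN := by
      intro e x hx
      rw [hKN] at hx ⊢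
      rwa [hordpres e x]
    have hQmap : ∀ (e : N ≃* N), (Q : Subgroup N).map e.toMonoidHom = (Q : Subgroup N) := by
      intro e
      ext z
      simp only [Subgroup.mem_map]
      constructor
      · rintro ⟨x, hx, rfl⟩
        exact hQpres e x hx
      · intro hz
        exact ⟨e.symm z, hQpres e.symm z hz, e.apply_symm_apply z⟩
    haveI : (Q : Subgroup N).Normal := hQnormal
    have hφbmk : ∀ (j : J) (x : N),
        QuotientGroup.congr (Q : Subgroup N) (Q : Subgroup N) (φ j) (hQmap (φ j))
          ((x : N ⧸ (Q : Subgroup N))) = ((φ j x : N) : N ⧸ (Q : Subgroup N)) :=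
      fun j x => QuotientGroup.congr_mk _ _ _ _ x
    let φb : J →* MulAut (N ⧸ (Q : Subgroup N)) := MonoidHom.mk'
      (fun j => QuotientGroup.congr (Q : Subgroup N) (Q : Subgroup N) (φ j) (hQmap (φ j)))
      (by
        intro a b
        ext x
        induction x using QuotientGroup.induction_on with
        | H x =>
          rw [MulAut.mul_apply, hφbmk, hφbmk, hφbmk, hφmul])
    have hφb : ∀ (j : J) (x : N),
        φb j ((x : N ⧸ (Q : Subgroup N))) = ((φ j x : N) : N ⧸ (Q : Subgroup N)) := hφbmk
    have hcardq : Nat.card (N ⧸ (Q : Subgroup N)) < n := by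
      rw [← hcard, Subgroup.card_eq_card_quotient_mul_card_subgroup (Q : Subgroup N)]
      have h0 : 0 < Nat.card (N ⧸ (Q : Subgroup N)) := Nat.card_pos
      exact (Nat.lt_mul_iff_one_lt_right h0).mpr
        ((Subgroup.one_lt_card_iff_ne_bot _).mpr hQne)
    obtain ⟨nb, hnb⟩ := IH _ hcardq (N ⧸ (Q : Subgroup N)) rfl φb
      (fun j => ((f j : N) : N ⧸ (Q : Subgroup N)))
      (by
        intro j j'
        show ((f (j * j') : N) : N ⧸ (Q : Subgroup N)) = _
        rw [hf j j', QuotientGroup.mk_mul, hφb])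
      (by
        intro p hp
        obtain ⟨np, hnp⟩ := hloc p hp
        refine ⟨((np : N) : N ⧸ (Q : Subgroup N)), ?_⟩
        intro j hj
        show ((f j : N) : N ⧸ (Q : Subgroup N)) = _
        rw [hnp j hj, QuotientGroup.mk_mul, QuotientGroup.mk_inv, hφb])
    obtain ⟨n₁, hn₁⟩ := QuotientGroup.mk_surjective nb
    obtain ⟨f₁, hf₁def⟩ : ∃ g : J → N, g = fun j => n₁ * f j * (φ j n₁)⁻¹ := ⟨_, rfl⟩
    have hf₁ : ∀ j j', f₁ (j * j') = f₁ j * φ j (f₁ j') := by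
      intro j j'
      simp only [hf₁def, hf j j', map_mul, map_inv, MulAut.mul_apply]
      group
    have hf₁mem : ∀ j, f₁ j ∈ (Q : Subgroup N) := by
      intro j
      have hone : ((f₁ j : N) : N ⧸ (Q : Subgroup N)) = 1 := by
        simp only [hf₁def]
        rw [QuotientGroup.mk_mul, QuotientGroup.mk_mul, QuotientGroup.mk_inv,
          ← hφb j n₁, hn₁, hnb j]
        group
      exact (QuotientGroup.eq_one_iff _).mp hone
    have hloc₁ : ∀ p : ℕ, p.Prime → ∃ xp : N, xp ∈ (Q : Subgroup N) ∧
        ∀ j : J, (∃ k, orderOf j = p ^ k) → f₁ j = xp⁻¹ * φ j xp := by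
      intro p hp
      obtain ⟨np, hnp⟩ := hloc p hp
      obtain ⟨x, y, hxy, hcxy, hxq, hyq⟩ := primary_decomp q hq (np * n₁⁻¹)
      have hxQ : x ∈ (Q : Subgroup N) := (hQmem x).mpr hxq
      have hyK : y ∈ KN := (hKN y).mpr hyq
      refine ⟨x, hxQ, ?_⟩
      intro j hj
      have hm : f₁ j = (np * n₁⁻¹)⁻¹ * φ j (np * n₁⁻¹) := by
        simp only [hf₁def, hnp j hj, map_mul, map_inv, mul_inv_rev, inv_inv]
        group
      have hA : Commute (x⁻¹ * φ j x) y⁻¹ :=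
        (hcommQK (x⁻¹ * φ j x) (mul_mem (inv_mem hxQ) (hQpres (φ j) x hxQ)) y hyK).inv_right
      have hsplit2 : f₁ j = (x⁻¹ * φ j x) * (y⁻¹ * φ j y) := by
        rw [hm, hxy, mul_inv_rev x y, map_mul (φ j) x y]
        calc y⁻¹ * x⁻¹ * (φ j x * φ j y) = y⁻¹ * (x⁻¹ * φ j x) * φ j y := by group
          _ = (x⁻¹ * φ j x) * y⁻¹ * φ j y := by rw [hA.symm.eq]
          _ = (x⁻¹ * φ j x) * (y⁻¹ * φ j y) := by group
      have hb1 : y⁻¹ * φ j y = 1 := by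
        apply hdisjQK
        · have h1 : y⁻¹ * φ j y = (x⁻¹ * φ j x)⁻¹ * f₁ j := by rw [hsplit2]; group
          rw [h1]
          exact mul_mem (inv_mem (mul_mem (inv_mem hxQ) (hQpres (φ j) x hxQ))) (hf₁mem j)
        · exact mul_mem (inv_mem hyK) (hKpres (φ j) y hyK)
      rw [hsplit2, hb1, mul_one]
    let φQ : J →* MulAut (Q : Subgroup N) := MonoidHom.mk'
      (fun j => subAut (Q : Subgroup N) (φ j) (fun z hz => hQpres (φ j) z hz)
        (fun z hz => hQpres (φ j)⁻¹ z hz))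
      (by
        intro a b
        ext z
        show φ (a * b) (z : N) = φ a (φ b (z : N))
        exact hφmul _ _ _)
    have hcardQlt : Nat.card (Q : Subgroup N) < n := by
      have h1 := Subgroup.card_mul_index (Q : Subgroup N)
      have h2 : (Q : Subgroup N).index ≠ 1 := fun h => hQtop (Subgroup.index_eq_one.mp h)
      have h3 : (Q : Subgroup N).index ≠ 0 := Subgroup.index_ne_zero_of_finite
      have h4 : 0 < Nat.card (Q : Subgroup N) := Nat.card_pos
      rw [← hcard, ← h1]
      exact (Nat.lt_mul_iff_one_lt_right h4).mpr (by omega)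
    obtain ⟨n₂, hn₂⟩ := IH (Nat.card (Q : Subgroup N)) hcardQlt (Q : Subgroup N) rfl φQ
      (fun j => (⟨f₁ j, hf₁mem j⟩ : (Q : Subgroup N)))
      (by
        intro j j'
        apply Subtype.ext
        show f₁ (j * j') = f₁ j * φ j (f₁ j')
        exact hf₁ j j')
      (by
        intro p hp
        obtain ⟨xp, hxpQ, hxp⟩ := hloc₁ p hp
        refine ⟨⟨xp, hxpQ⟩, ?_⟩
        intro j hj
        apply Subtype.ext
        show f₁ j = xp⁻¹ * φ j xp
        exact hxp j hj)
    refine ⟨(n₂ : N) * n₁, ?_⟩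
    intro j
    have h2 : f₁ j = (n₂ : N)⁻¹ * φ j (n₂ : N) :=
      congrArg (fun z : (Q : Subgroup N) => (z : N)) (hn₂ j)
    have h3 : f j = n₁⁻¹ * f₁ j * φ j n₁ := by simp only [hf₁def]; group
    rw [h3, h2, mul_inv_rev (n₂ : N) n₁, map_mul (φ j) (n₂ : N) n₁]
    group

/-- For finite nilpotent `J`, `N` with `J` acting on `N`, a crossed homomorphism
`f : J → N` whose restriction to each Sylow `p`-subgroup `J_p` (the set of elements
of `p`-power order) is cohomologous to the trivial map is itself cohomologous to
the trivial map. -/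
theorem stmt_16 {N J : Type*} [Group N] [Group J] [Finite N] [Finite J]
    [Group.IsNilpotent N] [Group.IsNilpotent J]
    (φ : J →* MulAut N) (f : J → N)
    (hf : ∀ j j', f (j * j') = f j * φ j (f j'))
    (hloc : ∀ p : ℕ, p.Prime → ∃ np : N, ∀ j : J,
      (∃ k : ℕ, orderOf j = p ^ k) → f j = np⁻¹ * φ j np) :
    ∃ n : N, ∀ j : J, f j = n⁻¹ * φ j n :=
  main_aux J (Nat.card N) N rfl φ f hf hloc
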